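/- With C as in the construction (d even, n > 2d+2, near-equal partition A, B of coordinates), the class M* defined as the union of all (n−2d−1)-dimensional subcubes whose anchors consist of 2d+1 coordinates with value 0 on coordinates in A and value 1 on coordinates in B is a maximum class of VC dimension n−2d−1 contained in the complement of C. Consequently C embeds in a maximum class of VC dimension 2d. -/

import Mathlib

open Finset

/-- A concept class `C` shatters a coordinate set `I` if every assignment of
values to the coordinates in `I` is realized by some concept in `C`. -/
def Shatters {α : Type*} (C : Finset (α → Bool)) (I : Finset α) : Prop :=
  ∀ f : α → Bool, ∃ c ∈ C, ∀ i ∈ I, c i = f i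

/-- The VC dimension of a concept class: the largest cardinality of a shattered
coordinate set. -/
noncomputable def vcDim {α : Type*} [Fintype α] [DecidableEq α]
    (C : Finset (α → Bool)) : ℕ :=
  letI := Classical.decPred (Shatters C)
  (Finset.univ.filter (Shatters C)).sup Finset.card

/-- The subcube with free coordinate set `S` and anchor `a`: all vectors that
agree with `a` outside `S`.  Its dimension is `S.card`. -/
def subcube {α : Type*} [Fintype α] [DecidableEq α] (S : Finset α) (a : α → Bool) :
    Finset (α → Bool) :=
  Finset.univ.filter fun c => ∀ i ∉ S, c i = a i

/-- The union `𝒜` of all `(n-d-1)`-cubes with all-zero anchors of size `d+1`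
whose majority of anchor coordinates lies in `A`. -/
def zeroAnchored (n d : ℕ) (A : Finset (Fin n)) : Finset (Fin n → Bool) :=
  Finset.univ.filter fun v => ∃ T : Finset (Fin n), T.card = d + 1 ∧
    d + 1 < 2 * (T ∩ A).card ∧ ∀ i ∈ T, v i = false

/-- The union `ℬ` of all `(n-d-1)`-cubes with all-one anchors of size `d+1`
whose majority of anchor coordinates lies in `B`. -/
def oneAnchored (n d : ℕ) (B : Finset (Fin n)) : Finset (Fin n → Bool) :=
  Finset.univ.filter fun v => ∃ T : Finset (Fin n), T.card = d + 1 ∧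
    d + 1 < 2 * (T ∩ B).card ∧ ∀ i ∈ T, v i = true

/-- The class `C` of the construction: the complement of the complete union of
constant-anchored `(n-d-1)`-cubes. -/
def constructionClass (n d : ℕ) (A B : Finset (Fin n)) : Finset (Fin n → Bool) :=
  Finset.univ \ (zeroAnchored n d A ∪ oneAnchored n d B)

/-- The union of all `(n-2d-1)`-cubes whose anchors (of size `2d+1`) are `0` on
coordinates in `A` and `1` on coordinates in `B`. -/
def mStar (n d : ℕ) (B : Finset (Fin n)) : Finset (Fin n → Bool) :=
  Finset.univ.filter fun v => ∃ T : Finset (Fin n), T.card = 2 * d + 1 ∧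
    ∀ i ∈ T, v i = decide (i ∈ B)


open Finset

section Aux
variable {n : ℕ}

def thr (n : ℕ) (b : Fin n → Bool) (m : ℕ) : Finset (Fin n → Bool) :=
  Finset.univ.filter fun v => (Finset.univ.filter fun i => v i ≠ b i).card ≤ m

lemma mem_thr {b : Fin n → Bool} {m : ℕ} {v : Fin n → Bool} :
    v ∈ thr n b m ↔ (Finset.univ.filter fun i => v i ≠ b i).card ≤ m := by
  simp [thr]

lemma agree_add_disagree (b v : Fin n → Bool) :
    (Finset.univ.filter fun i => v i = b i).card
      + (Finset.univ.filter fun i => v i ≠ b i).card = n := by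
  classical
  have := Finset.card_filter_add_card_filter_not
    (s := (Finset.univ : Finset (Fin n))) (p := fun i => v i = b i)
  simpa using this

lemma thr_card (b : Fin n → Bool) (m : ℕ) :
    (thr n b m).card = ∑ i ∈ Finset.range (m + 1), n.choose i := by
  classical
  have hdisj : ((Finset.range (m+1) : Finset ℕ) : Set ℕ).PairwiseDisjoint
      (fun i => (Finset.univ : Finset (Fin n)).powersetCard i) := by
    intro i _ j _ hij
    simp only [Function.onFun, Finset.disjoint_left]
    intro S hS hS'
    rw [Finset.mem_powersetCard] at hS hS'
    exact hij (hS.2 ▸ hS'.2 ▸ rfl)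
  have hcard : ((Finset.range (m+1)).biUnion
      (fun i => (Finset.univ : Finset (Fin n)).powersetCard i)).card
      = ∑ i ∈ Finset.range (m+1), n.choose i := by
    rw [Finset.card_biUnion hdisj]
    simp [Finset.card_powersetCard]
  rw [← hcard]
  apply Finset.card_bij (fun v _ => Finset.univ.filter fun i => v i ≠ b i)
  · intro v hv
    rw [mem_thr] at hv
    simp only [Finset.mem_biUnion, Finset.mem_range, Finset.mem_powersetCard]
    exact ⟨_, Nat.lt_succ_of_le hv, Finset.subset_univ _, rfl⟩
  · intro v hv w hw h
    funext i
    have hiff := Finset.ext_iff.mp h i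
    simp only [Finset.mem_filter, Finset.mem_univ, true_and] at hiff
    by_cases h1 : v i = b i
    · have h2 : w i = b i := by
        by_contra h2
        exact (hiff.mpr h2) h1
      rw [h1, h2]
    · have h2 : w i ≠ b i := hiff.mp h1
      cases hv' : v i <;> cases hw' : w i <;> cases hb : b i <;> simp_all
  · intro S hS
    simp only [Finset.mem_biUnion, Finset.mem_range, Finset.mem_powersetCard] at hS
    obtain ⟨i, hi, -, hScard⟩ := hS
    have hfil : (Finset.univ.filter fun j =>
        (if j ∈ S then !(b j) else b j) ≠ b j) = S := by
      ext j
      by_cases hj : j ∈ S <;> simp [hj]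
    refine ⟨fun j => if j ∈ S then !(b j) else b j, ?_, hfil⟩
    rw [mem_thr, hfil, hScard]
    omega

lemma thr_shatters (b : Fin n → Bool) (m : ℕ) (I : Finset (Fin n)) (hI : I.card ≤ m) :
    Shatters (thr n b m) I := by
  intro f
  refine ⟨fun i => if i ∈ I then f i else b i, ?_, fun i hi => by simp [hi]⟩
  rw [mem_thr]
  refine le_trans (Finset.card_le_card ?_) hI
  intro i hi
  simp only [Finset.mem_filter, Finset.mem_univ, true_and] at hi
  by_contra hiI
  simp [hiI] at hi

lemma thr_not_shatters (b : Fin n → Bool) (m : ℕ) (I : Finset (Fin n)) (hI : m < I.card) :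
    ¬ Shatters (thr n b m) I := by
  intro h
  obtain ⟨c, hc, hcf⟩ := h (fun i => !(b i))
  rw [mem_thr] at hc
  have hsub : I ⊆ Finset.univ.filter fun i => c i ≠ b i := by
    intro i hi
    simp only [Finset.mem_filter, Finset.mem_univ, true_and]
    rw [hcf i hi]
    cases b i <;> simp
  have := Finset.card_le_card hsub
  omega

lemma thr_vcDim (b : Fin n → Bool) (m : ℕ) (hm : m ≤ n) :
    vcDim (thr n b m) = m := by
  classical
  unfold _root_.vcDim
  apply le_antisymm
  · apply Finset.sup_le
    intro I hI
    have hsh : Shatters (thr n b m) I := (Finset.mem_filter.mp hI).2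
    by_contra hlt
    exact thr_not_shatters b m I (by omega) hsh
  · obtain ⟨I, -, hIcard⟩ := Finset.exists_subset_card_eq (s := (Finset.univ : Finset (Fin n))) (n := m)
      (by simp [hm])
    calc m = I.card := hIcard.symm
    _ ≤ _ := Finset.le_sup (Finset.mem_filter.mpr
        ⟨Finset.mem_univ _, thr_shatters b m I hIcard.le⟩)

lemma mStar_eq (n d : ℕ) (B : Finset (Fin n)) (hn : 2*d+1 ≤ n) :
    mStar n d B = thr n (fun i => decide (i ∈ B)) (n - (2*d+1)) := by
  classical
  ext v
  simp only [mStar, Finset.mem_filter, Finset.mem_univ, true_and, mem_thr]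
  have h2 := agree_add_disagree (fun i => decide (i ∈ B)) v
  constructor
  · rintro ⟨T, hT, hTv⟩
    have hsub : T ⊆ Finset.univ.filter fun i => v i = decide (i ∈ B) :=
      fun i hi => Finset.mem_filter.mpr ⟨Finset.mem_univ i, hTv i hi⟩
    have h1 := Finset.card_le_card hsub
    omega
  · intro h
    have : 2*d+1 ≤ (Finset.univ.filter fun i => v i = decide (i ∈ B)).card := by omega
    obtain ⟨T, hTsub, hTcard⟩ := Finset.exists_subset_card_eq this
    exact ⟨T, hTcard, fun i hi => (Finset.mem_filter.mp (hTsub hi)).2⟩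

end Aux
/-- In the construction, `M*` is a maximum class of VC dimension `n-2d-1`
contained in the complement of `C`; consequently `C` embeds in a maximum class
of VC dimension `2d`. -/
theorem construction_embeds_in_2d_maximum (n d : ℕ)
    (hdeven : Even d) (hn : 2 * d + 2 < n)
    (A B : Finset (Fin n)) (hB : B = Aᶜ)
    (hA : A.card = (n + 1) / 2 ∨ A.card = n / 2) :
    mStar n d B ⊆ zeroAnchored n d A ∪ oneAnchored n d B ∧
    (mStar n d B).card = ∑ i ∈ Finset.range (n - (2 * d + 1) + 1), n.choose i ∧
    vcDim (mStar n d B) = n - (2 * d + 1) ∧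
    ∃ Cs : Finset (Fin n → Bool), constructionClass n d A B ⊆ Cs ∧
      Cs.card = ∑ i ∈ Finset.range (2 * d + 1), n.choose i ∧
      vcDim Cs = 2 * d := by
  have hAB : ∀ i : Fin n, i ∈ B ↔ i ∉ A := by subst hB; simp
  have hsub : mStar n d B ⊆ zeroAnchored n d A ∪ oneAnchored n d B := by
    intro v hv
    simp only [mStar, Finset.mem_filter, Finset.mem_univ, true_and] at hv
    obtain ⟨T, hTcard, hTv⟩ := hv
    have hsplit : (T ∩ A).card + (T ∩ B).card = 2 * d + 1 := by
      classical
      have h1 : T.filter (· ∈ A) = T ∩ A := by ext i; simp [Finset.mem_inter]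
      have h2 : T.filter (fun i => ¬ i ∈ A) = T ∩ B := by
        ext i; simp [Finset.mem_inter, hAB]
      have := Finset.card_filter_add_card_filter_not
        (s := T) (p := fun i => i ∈ A)
      rw [h1, h2] at this
      omega
    rw [Finset.mem_union]
    by_cases hc : d + 1 ≤ (T ∩ A).card
    · left
      obtain ⟨T', hT'sub, hT'card⟩ := Finset.exists_subset_card_eq (s := T ∩ A) (n := d+1) hc
      simp only [zeroAnchored, Finset.mem_filter, Finset.mem_univ, true_and]
      refine ⟨T', hT'card, ?_, ?_⟩
      · have : T' ∩ A = T' := Finset.inter_eq_left.mpr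
          (hT'sub.trans Finset.inter_subset_right)
        rw [this, hT'card]; omega
      · intro i hi
        have hiA : i ∈ A := Finset.inter_subset_right (hT'sub hi)
        have hiT : i ∈ T := Finset.inter_subset_left (hT'sub hi)
        rw [hTv i hiT]
        have hnB : i ∉ B := fun h => (hAB i).mp h hiA
        simp [hnB]
    · right
      have hc' : d + 1 ≤ (T ∩ B).card := by omega
      obtain ⟨T', hT'sub, hT'card⟩ := Finset.exists_subset_card_eq (s := T ∩ B) (n := d+1) hc'
      simp only [oneAnchored, Finset.mem_filter, Finset.mem_univ, true_and]
      refine ⟨T', hT'card, ?_, ?_⟩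
      · have : T' ∩ B = T' := Finset.inter_eq_left.mpr
          (hT'sub.trans Finset.inter_subset_right)
        rw [this, hT'card]; omega
      · intro i hi
        have hiB : i ∈ B := Finset.inter_subset_right (hT'sub hi)
        have hiT : i ∈ T := Finset.inter_subset_left (hT'sub hi)
        rw [hTv i hiT]
        simp [hiB]
  have hmeq := mStar_eq n d B (by omega)
  refine ⟨hsub, ?_, ?_, ?_⟩
  · rw [hmeq, thr_card]
  · rw [hmeq]
    exact thr_vcDim _ _ (by omega)
  · refine ⟨thr n (fun i => !(decide (i ∈ B))) (2*d), ?_, thr_card _ _,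
      thr_vcDim _ _ (by omega)⟩
    intro v hv
    simp only [constructionClass, Finset.mem_sdiff, Finset.mem_univ, true_and] at hv
    have hvm : v ∉ mStar n d B := fun h => hv (hsub h)
    rw [hmeq, mem_thr] at hvm
    push_neg at hvm
    rw [mem_thr]
    have hfl : (Finset.univ.filter fun i => v i ≠ !(decide (i ∈ B)))
        = Finset.univ.filter fun i => v i = decide (i ∈ B) := by
      apply Finset.filter_congr
      intro i _
      cases hx : v i <;> cases hy : decide (i ∈ B) <;> simp
    rw [hfl]
    have := agree_add_disagree (fun i => decide (i ∈ B)) v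
    omega
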